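/- Let P, Q, R, S be A-bounded operators on H. Then ω_𝔸([[P,Q],[R,S]]) ≥ max{ ω_𝔸([[0,Q],[R,0]]), max{ω_A(P), ω_A(S)} }. -/

import Mathlib

open ContinuousLinearMap

/-- The `A`-seminorm of a vector: `‖x‖_A = √⟨Ax, x⟩`. -/
noncomputable def vnormA {H : Type*} [NormedAddCommGroup H] [InnerProductSpace ℂ H]
    (A : H →L[ℂ] H) (x : H) : ℝ :=
  Real.sqrt (RCLike.re (inner ℂ (A x) x : ℂ))

/-- `T` is `A`-bounded, i.e. `T ∈ B_{A^{1/2}}(H)`. -/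
def ABounded {H : Type*} [NormedAddCommGroup H] [InnerProductSpace ℂ H]
    (A T : H →L[ℂ] H) : Prop :=
  ∃ c : ℝ, 0 < c ∧ ∀ x, vnormA A (T x) ≤ c * vnormA A x

/-- The `A`-operator seminorm `‖T‖_A = sup{‖Tx‖_A : ‖x‖_A = 1}`. -/
noncomputable def opNormA {H : Type*} [NormedAddCommGroup H] [InnerProductSpace ℂ H]
    (A T : H →L[ℂ] H) : ℝ :=
  sSup {c : ℝ | ∃ x : H, vnormA A x = 1 ∧ c = vnormA A (T x)}

/-- The `A`-numerical radius `ω_A(T) = sup{|⟨ATx, x⟩| : ‖x‖_A = 1}`. -/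
noncomputable def wA {H : Type*} [NormedAddCommGroup H] [InnerProductSpace ℂ H]
    (A T : H →L[ℂ] H) : ℝ :=
  sSup {c : ℝ | ∃ x : H, vnormA A x = 1 ∧ c = ‖(inner ℂ (A (T x)) x : ℂ)‖}

/-- `Ts` is the reduced (Douglas) solution of `AX = T*A`, i.e. `Ts = T^{♯_A}`. -/
def IsReducedAdjoint {H : Type*} [NormedAddCommGroup H] [InnerProductSpace ℂ H]
    [CompleteSpace H] (A T Ts : H →L[ℂ] H) : Prop :=
  A ∘L Ts = (ContinuousLinearMap.adjoint T) ∘L A ∧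
    ∀ y, Ts y ∈ closure (Set.range A)

/-- The `2 × 2` operator matrix `[[P, Q], [R, S]]` acting on `H ⊕ H` (with the `ℓ²` product
inner product). -/
noncomputable def blk {H : Type*} [NormedAddCommGroup H] [InnerProductSpace ℂ H]
    (P Q R S : H →L[ℂ] H) : WithLp 2 (H × H) →L[ℂ] WithLp 2 (H × H) :=
  letI e := (WithLp.prodContinuousLinearEquiv 2 ℂ H H)
  (e.symm.toContinuousLinearMap) ∘L
    ((P.comp (fst ℂ H H) + Q.comp (snd ℂ H H)).prod
      (R.comp (fst ℂ H H) + S.comp (snd ℂ H H))) ∘L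
    (e.toContinuousLinearMap)

/-- `𝔸 = diag(A, A)` on `H ⊕ H`. -/
noncomputable def AA {H : Type*} [NormedAddCommGroup H] [InnerProductSpace ℂ H]
    (A : H →L[ℂ] H) : WithLp 2 (H × H) →L[ℂ] WithLp 2 (H × H) :=
  blk A 0 0 A

section aux
variable {E : Type*} [NormedAddCommGroup E] [InnerProductSpace ℂ E]

lemma abs_inner_le_vnormA (A : E →L[ℂ] E)
    (hsa : ∀ u v : E, (inner ℂ (A u) v : ℂ) = inner ℂ u (A v))
    (hpos : ∀ u : E, 0 ≤ RCLike.re (inner ℂ (A u) u : ℂ)) (x y : E) :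
    ‖(inner ℂ (A x) y : ℂ)‖ ≤ vnormA A x * vnormA A y := by
  set z : ℂ := (inner ℂ (A x) y : ℂ) with hzdef
  set p : ℝ := RCLike.re (inner ℂ (A x) x : ℂ) with hpdef
  set q : ℝ := RCLike.re (inner ℂ (A y) y : ℂ) with hqdef
  have hp0 : 0 ≤ p := hpos x
  have hq0 : 0 ≤ q := hpos y
  have key : ‖z‖ ^ 2 ≤ p * q := by
    by_cases hz : z = 0
    · simp [hz]; positivity
    have habs : (0:ℝ) < ‖z‖ := norm_pos_iff.mpr hz
    set c : ℂ := (starRingEnd ℂ) z / (‖z‖ : ℂ) with hcdef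
    have hznz : (‖z‖ : ℂ) ≠ 0 := by exact_mod_cast habs.ne'
    have hzz : (starRingEnd ℂ) z * z = (‖z‖ : ℂ) * (‖z‖ : ℂ) := by
      rw [mul_comm, Complex.mul_conj, Complex.normSq_eq_norm_sq]
      push_cast
      ring
    have hcz : c * z = (‖z‖ : ℂ) := by
      rw [hcdef, div_mul_eq_mul_div, hzz, mul_div_assoc, div_self hznz, mul_one]
    have hcz2 : (starRingEnd ℂ) c * (starRingEnd ℂ) z = (‖z‖ : ℂ) := by
      have := congrArg (starRingEnd ℂ) hcz
      simpa [Complex.conj_ofReal] using this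
    have hcc : (starRingEnd ℂ) c * c = 1 := by
      rw [hcdef]
      simp only [map_div₀, Complex.conj_conj, Complex.conj_ofReal]
      rw [div_mul_div_comm, mul_comm z, hzz, div_self (mul_ne_zero hznz hznz)]
    have hyx : (inner ℂ (A y) x : ℂ) = (starRingEnd ℂ) z := by
      rw [hsa y x, ← inner_conj_symm, hzdef]
    have key2 : ∀ t : ℝ, 0 ≤ t^2*p - 2*t*‖z‖ + q := by
      intro t
      have h0 := hpos ((t:ℂ) • x - c • y)
      have hexp : (inner ℂ (A ((t:ℂ) • x - c • y)) ((t:ℂ) • x - c • y) : ℂ)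
          = ((t^2 : ℝ) : ℂ) * inner ℂ (A x) x - ((2*t*‖z‖ : ℝ) : ℂ)
            + inner ℂ (A y) y := by
        simp only [map_sub, map_smul, inner_sub_left, inner_sub_right,
          inner_smul_left, inner_smul_right, Complex.conj_ofReal, hyx, ← hzdef]
        push_cast
        linear_combination ((inner ℂ (A y) y : ℂ)) * hcc - (t:ℂ) * hcz - (t:ℂ) * hcz2
      rw [hexp] at h0
      simpa [hpdef, hqdef, RCLike.re_to_complex, Complex.sub_re, Complex.add_re,
        Complex.ofReal_re, Complex.re_ofReal_mul, ← Complex.ofReal_pow] using h0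
    by_cases hp : p = 0
    · exfalso
      have h := key2 ((q+1)/(2*‖z‖))
      rw [hp] at h
      have e : ((q+1)/(2*‖z‖))^2 * 0 - 2*((q+1)/(2*‖z‖))*‖z‖ + q = -1 := by
        field_simp
        ring
      rw [e] at h
      linarith
    · have hp' : 0 < p := lt_of_le_of_ne hp0 (Ne.symm hp)
      have h := key2 (‖z‖ / p)
      have e1 : (‖z‖ / p)^2 * p = ‖z‖^2 / p := by
        field_simp
      have e2 : 2*(‖z‖/p)*‖z‖ = 2*(‖z‖^2/p) := by ring
      rw [e1, e2] at h
      have h3 : ‖z‖^2 / p ≤ q := by linarith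
      calc ‖z‖^2 = (‖z‖^2/p)*p := by field_simp
        _ ≤ q*p := mul_le_mul_of_nonneg_right h3 hp0
        _ = p*q := mul_comm _ _
  have : ‖z‖ = Real.sqrt (‖z‖^2) := (Real.sqrt_sq (norm_nonneg _)).symm
  rw [this]
  unfold vnormA
  rw [← hpdef, ← hqdef, ← Real.sqrt_mul hp0]
  exact Real.sqrt_le_sqrt key

end aux

section aux2
variable {E : Type*} [NormedAddCommGroup E] [InnerProductSpace ℂ E]

lemma sq_vnormA (A : E →L[ℂ] E) (hpos : ∀ u : E, 0 ≤ RCLike.re (inner ℂ (A u) u : ℂ)) (x : E) :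
    vnormA A x ^ 2 = RCLike.re (inner ℂ (A x) x : ℂ) := Real.sq_sqrt (hpos x)

lemma vnormA_nonneg (A : E →L[ℂ] E) (x : E) : 0 ≤ vnormA A x := Real.sqrt_nonneg _

lemma vnormA_add_le (A : E →L[ℂ] E)
    (hsa : ∀ u v : E, (inner ℂ (A u) v : ℂ) = inner ℂ u (A v))
    (hpos : ∀ u : E, 0 ≤ RCLike.re (inner ℂ (A u) u : ℂ)) (u v : E) :
    vnormA A (u + v) ≤ vnormA A u + vnormA A v := by
  have h := abs_inner_le_vnormA A hsa hpos u v
  have hvu : (inner ℂ (A v) u : ℂ) = (starRingEnd ℂ) (inner ℂ (A u) v : ℂ) := by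
    rw [hsa v u, ← inner_conj_symm]
  have hre : RCLike.re (inner ℂ (A (u+v)) (u+v) : ℂ) ≤ (vnormA A u + vnormA A v)^2 := by
    have e : (inner ℂ (A (u+v)) (u+v) : ℂ)
        = inner ℂ (A u) u + inner ℂ (A v) v + (inner ℂ (A u) v + inner ℂ (A v) u) := by
      simp only [map_add, inner_add_left, inner_add_right]
      ring
    rw [e]
    have h1 := sq_vnormA A hpos u
    have h2 := sq_vnormA A hpos v
    have h3 := Complex.re_le_norm (inner ℂ (A u) v : ℂ)
    simp only [RCLike.re_to_complex, Complex.add_re, hvu, Complex.conj_re] at *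
    nlinarith [vnormA_nonneg A u, vnormA_nonneg A v]
  have : vnormA A (u+v) = Real.sqrt (RCLike.re (inner ℂ (A (u+v)) (u+v) : ℂ)) := rfl
  rw [this]
  calc Real.sqrt (RCLike.re (inner ℂ (A (u+v)) (u+v) : ℂ))
      ≤ Real.sqrt ((vnormA A u + vnormA A v)^2) := Real.sqrt_le_sqrt hre
    _ = vnormA A u + vnormA A v := Real.sqrt_sq (add_nonneg (vnormA_nonneg A u) (vnormA_nonneg A v))

end aux2

section main
variable {H : Type*} [NormedAddCommGroup H] [InnerProductSpace ℂ H]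

lemma blk_fst (P Q R S : H →L[ℂ] H) (x : WithLp 2 (H × H)) :
    (blk P Q R S x).fst = P x.fst + Q x.snd := rfl

lemma blk_snd (P Q R S : H →L[ℂ] H) (x : WithLp 2 (H × H)) :
    (blk P Q R S x).snd = R x.fst + S x.snd := rfl

lemma AA_fst (A : H →L[ℂ] H) (x : WithLp 2 (H × H)) : (AA A x).fst = A x.fst := by
  rw [AA, blk_fst]; simp

lemma AA_snd (A : H →L[ℂ] H) (x : WithLp 2 (H × H)) : (AA A x).snd = A x.snd := by
  rw [AA, blk_snd]; simp

lemma inner_AA (A : H →L[ℂ] H) (x y : WithLp 2 (H × H)) :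
    (inner ℂ (AA A x) y : ℂ) = inner ℂ (A x.fst) y.fst + inner ℂ (A x.snd) y.snd := by
  rw [WithLp.prod_inner_apply]; simp only [WithLp.ofLp_fst, WithLp.ofLp_snd]; rw [AA_fst, AA_snd]

end main

theorem stmt4 {H : Type*} [NormedAddCommGroup H] [InnerProductSpace ℂ H] [CompleteSpace H]
    (A : H →L[ℂ] H) (hA : A.IsPositive)
    (P Q R S : H →L[ℂ] H) (hP : ABounded A P) (hQ : ABounded A Q)
    (hR : ABounded A R) (hS : ABounded A S) :
    max (wA (AA A) (blk 0 Q R 0)) (max (wA A P) (wA A S)) ≤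
      wA (AA A) (blk P Q R S) := by
  obtain ⟨cP, hcP, hPb⟩ := hP
  obtain ⟨cQ, hcQ, hQb⟩ := hQ
  obtain ⟨cR, hcR, hRb⟩ := hR
  obtain ⟨cS, hcS, hSb⟩ := hS
  have hsaA : ∀ u v : H, (inner ℂ (A u) v : ℂ) = inner ℂ u (A v) := by
    intro u v
    conv_lhs => rw [← hA.isSelfAdjoint.adjoint_eq]
    exact ContinuousLinearMap.adjoint_inner_left A v u
  have hposA : ∀ u : H, 0 ≤ RCLike.re (inner ℂ (A u) u : ℂ) := fun u => hA.2 u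
  have hsa2 : ∀ u v : WithLp 2 (H × H), (inner ℂ (AA A u) v : ℂ) = inner ℂ u (AA A v) := by
    intro u v
    rw [inner_AA, WithLp.prod_inner_apply]; simp only [WithLp.ofLp_fst, WithLp.ofLp_snd]; rw [AA_fst, AA_snd, hsaA, hsaA]
  have hpos2 : ∀ u : WithLp 2 (H × H), 0 ≤ RCLike.re (inner ℂ (AA A u) u : ℂ) := by
    intro u
    rw [inner_AA, map_add]
    exact add_nonneg (hposA _) (hposA _)
  have hsq1 : ∀ y : WithLp 2 (H × H), vnormA (AA A) y = 1 →
      (vnormA A y.fst)^2 + (vnormA A y.snd)^2 = 1 := by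
    intro y hy
    have h3 : RCLike.re (inner ℂ (AA A y) y : ℂ) = 1 := by
      have := Real.sq_sqrt (hpos2 y)
      rw [show Real.sqrt (RCLike.re (inner ℂ (AA A y) y : ℂ)) = 1 from hy] at this
      simpa using this.symm
    rw [inner_AA, map_add, ← sq_vnormA A hposA, ← sq_vnormA A hposA] at h3
    exact h3
  have hTbound : ∀ y : WithLp 2 (H × H), vnormA (AA A) y = 1 →
      ‖(inner ℂ (AA A (blk P Q R S y)) y : ℂ)‖ ≤ (cP + cQ) + (cR + cS) := by
    intro y hy
    have hsq := hsq1 y hy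
    have hf1 : vnormA A y.fst ≤ 1 := by
      nlinarith [vnormA_nonneg A y.fst, vnormA_nonneg A y.snd]
    have hs1 : vnormA A y.snd ≤ 1 := by
      nlinarith [vnormA_nonneg A y.fst, vnormA_nonneg A y.snd]
    have h1 := abs_inner_le_vnormA (AA A) hsa2 hpos2 (blk P Q R S y) y
    rw [hy, mul_one] at h1
    refine h1.trans ?_
    have hfst : vnormA A (P y.fst + Q y.snd) ≤ cP + cQ := by
      calc vnormA A (P y.fst + Q y.snd)
          ≤ vnormA A (P y.fst) + vnormA A (Q y.snd) := vnormA_add_le A hsaA hposA _ _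
        _ ≤ cP * vnormA A y.fst + cQ * vnormA A y.snd := add_le_add (hPb _) (hQb _)
        _ ≤ cP * 1 + cQ * 1 :=
            add_le_add (mul_le_mul_of_nonneg_left hf1 hcP.le)
              (mul_le_mul_of_nonneg_left hs1 hcQ.le)
        _ = cP + cQ := by ring
    have hsnd : vnormA A (R y.fst + S y.snd) ≤ cR + cS := by
      calc vnormA A (R y.fst + S y.snd)
          ≤ vnormA A (R y.fst) + vnormA A (S y.snd) := vnormA_add_le A hsaA hposA _ _
        _ ≤ cR * vnormA A y.fst + cS * vnormA A y.snd := add_le_add (hRb _) (hSb _)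
        _ ≤ cR * 1 + cS * 1 :=
            add_le_add (mul_le_mul_of_nonneg_left hf1 hcR.le)
              (mul_le_mul_of_nonneg_left hs1 hcS.le)
        _ = cR + cS := by ring
    have e : RCLike.re (inner ℂ (AA A (blk P Q R S y)) (blk P Q R S y) : ℂ)
        = (vnormA A (P y.fst + Q y.snd))^2 + (vnormA A (R y.fst + S y.snd))^2 := by
      rw [inner_AA, blk_fst, blk_snd, map_add, ← sq_vnormA A hposA, ← sq_vnormA A hposA]
    show Real.sqrt (RCLike.re (inner ℂ (AA A (blk P Q R S y)) (blk P Q R S y) : ℂ)) ≤ _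
    rw [e]
    calc Real.sqrt ((vnormA A (P y.fst + Q y.snd))^2 + (vnormA A (R y.fst + S y.snd))^2)
        ≤ Real.sqrt (((cP + cQ) + (cR + cS))^2) := by
          apply Real.sqrt_le_sqrt
          nlinarith [vnormA_nonneg A (P y.fst + Q y.snd), vnormA_nonneg A (R y.fst + S y.snd),
            hcP.le, hcQ.le, hcR.le, hcS.le]
      _ = (cP + cQ) + (cR + cS) := Real.sqrt_sq (by positivity)
  have hBdd : BddAbove {c : ℝ | ∃ x, vnormA (AA A) x = 1 ∧
      c = ‖(inner ℂ (AA A (blk P Q R S x)) x : ℂ)‖} := by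
    refine ⟨(cP + cQ) + (cR + cS), ?_⟩
    rintro c ⟨y, hy, rfl⟩
    exact hTbound y hy
  have hW0 : 0 ≤ wA (AA A) (blk P Q R S) := by
    apply Real.sSup_nonneg
    rintro c ⟨y, hy, rfl⟩
    exact norm_nonneg _
  have hmem : ∀ y : WithLp 2 (H × H), vnormA (AA A) y = 1 →
      ‖(inner ℂ (AA A (blk P Q R S y)) y : ℂ)‖ ≤ wA (AA A) (blk P Q R S) := by
    intro y hy
    exact le_csSup hBdd ⟨y, hy, rfl⟩
  refine max_le ?_ (max_le ?_ ?_)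
  · refine Real.sSup_le ?_ hW0
    rintro c ⟨y, hy, rfl⟩
    set y' : WithLp 2 (H × H) := (WithLp.equiv 2 (H × H)).symm (y.fst, -y.snd) with hy'def
    have hy'f : y'.fst = y.fst := rfl
    have hy's : y'.snd = -y.snd := rfl
    have hy'1 : vnormA (AA A) y' = 1 := by
      show Real.sqrt (RCLike.re (inner ℂ (AA A y') y' : ℂ)) = 1
      rw [inner_AA, hy'f, hy's, map_neg, inner_neg_neg]
      rw [← inner_AA]
      exact hy
    have h1 := hmem y hy
    have h2 := hmem y' hy'1
    have hsplit : (inner ℂ (AA A ((blk 0 Q R 0) y)) y : ℂ)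
        = ((inner ℂ (AA A ((blk P Q R S) y)) y : ℂ)
            - (inner ℂ (AA A ((blk P Q R S) y')) y' : ℂ)) / 2 := by
      simp only [inner_AA, blk_fst, blk_snd, hy'f, hy's, ContinuousLinearMap.zero_apply,
        zero_add, add_zero, map_neg, map_add, inner_neg_left, inner_neg_right, inner_add_left]
      ring
    rw [hsplit]
    calc ‖((inner ℂ (AA A ((blk P Q R S) y)) y : ℂ)
            - (inner ℂ (AA A ((blk P Q R S) y')) y' : ℂ)) / 2‖
        = ‖(inner ℂ (AA A ((blk P Q R S) y)) y : ℂ)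
            - (inner ℂ (AA A ((blk P Q R S) y')) y' : ℂ)‖ / 2 := by
          rw [norm_div]; norm_num
      _ ≤ (‖(inner ℂ (AA A ((blk P Q R S) y)) y : ℂ)‖
            + ‖(inner ℂ (AA A ((blk P Q R S) y')) y' : ℂ)‖) / 2 := by
          gcongr
          exact norm_sub_le _ _
      _ ≤ wA (AA A) (blk P Q R S) := by linarith
  · refine Real.sSup_le ?_ hW0
    rintro c ⟨x, hx, rfl⟩
    set y : WithLp 2 (H × H) := (WithLp.equiv 2 (H × H)).symm (x, 0) with hydef
    have hyf : y.fst = x := rfl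
    have hys : y.snd = (0 : H) := rfl
    have hy1 : vnormA (AA A) y = 1 := by
      show Real.sqrt (RCLike.re (inner ℂ (AA A y) y : ℂ)) = 1
      rw [inner_AA, hyf, hys]
      simp only [map_zero, inner_zero_right, add_zero]
      exact hx
    have heq : (inner ℂ (AA A (blk P Q R S y)) y : ℂ) = inner ℂ (A (P x)) x := by
      rw [inner_AA, blk_fst, blk_snd, hyf, hys]
      simp
    have := hmem y hy1
    rw [heq] at this
    exact this
  · refine Real.sSup_le ?_ hW0
    rintro c ⟨x, hx, rfl⟩
    set y : WithLp 2 (H × H) := (WithLp.equiv 2 (H × H)).symm (0, x) with hydef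
    have hyf : y.fst = (0 : H) := rfl
    have hys : y.snd = x := rfl
    have hy1 : vnormA (AA A) y = 1 := by
      show Real.sqrt (RCLike.re (inner ℂ (AA A y) y : ℂ)) = 1
      rw [inner_AA, hyf, hys]
      simp only [map_zero, inner_zero_right, zero_add]
      exact hx
    have heq : (inner ℂ (AA A (blk P Q R S y)) y : ℂ) = inner ℂ (A (S x)) x := by
      rw [inner_AA, blk_fst, blk_snd, hyf, hys]
      simp
    have := hmem y hy1
    rw [heq] at this
    exact this
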